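/- Under the hypotheses of the self-dual block decomposition (each block B_k with defect δ_k = l_k² − l_k·l̄_k where l̄_k = ℏ_k − l_k), for any two vectors l', l'' in the orbit restriction to B_k one has 0 ≤ l_k² − l'·l'' ≤ δ_k, with the extreme values attained exactly for l'' = l' and l'' = l̄' respectively. Consequently, if δ_k = 1, at most one vector of the restriction can occur in an admissible set, and if δ_k = 2, at most two can occur, and any maximal admissible pair is of the form {l_k, l̄_k}. -/
import Mathlib


/-- Within a self-dual block of defect δ, products range in [lsq − δ, lsq],
with the extremes attained exactly at the vector itself and its dual; in
particular blocks of defect 1 (resp. 2) contribute at most 1 (resp. 2)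
vectors to an admissible set, maximal pairs being dual pairs. -/
theorem selfdual_block_range {V : Type*} [AddCommGroup V] [Module ℚ V]
    (B : LinearMap.BilinForm ℚ V) (hsymm : ∀ x y, B x y = B y x)
    (hpos : ∀ x : V, x ≠ 0 → 0 < B x x)
    (h : V) (lsq δ : ℚ) (hδ : δ = 2 * lsq - B h h / 2) :
    (∀ l' l'' : V, B l' l' = lsq → B l'' l'' = lsq →
        B l' h = B h h / 2 → B l'' h = B h h / 2 →
      (0 ≤ lsq - B l' l'' ∧ lsq - B l' l'' ≤ δ) ∧
      (lsq - B l' l'' = 0 ↔ l'' = l') ∧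
      (lsq - B l' l'' = δ ↔ l'' = h - l')) ∧
    (∀ A : Finset V,
      (∀ x ∈ A, B x x = lsq ∧ B x h = B h h / 2) →
      (∀ x ∈ A, ∀ y ∈ A, x ≠ y →
        lsq - B x y = 2 ∨ lsq - B x y = 3 ∨ lsq - B x y = 5) →
      (δ = 1 → A.card ≤ 1) ∧
      (δ = 2 → A.card ≤ 2 ∧ ∀ x ∈ A, ∀ y ∈ A, x ≠ y → y = h - x)) := by
  have key : ∀ x : V, 0 ≤ B x x ∧ (B x x = 0 ↔ x = 0) := by
    intro x
    by_cases hx : x = 0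
    · simp [hx]
    · exact ⟨le_of_lt (hpos x hx), ⟨fun h0 => absurd h0 (ne_of_gt (hpos x hx)),
        fun h0 => absurd h0 hx⟩⟩
  have part1 : ∀ l' l'' : V, B l' l' = lsq → B l'' l'' = lsq →
        B l' h = B h h / 2 → B l'' h = B h h / 2 →
      (0 ≤ lsq - B l' l'' ∧ lsq - B l' l'' ≤ δ) ∧
      (lsq - B l' l'' = 0 ↔ l'' = l') ∧
      (lsq - B l' l'' = δ ↔ l'' = h - l') := by
    intro l' l'' h1 h2 h3 h4
    have hd : B (l' - l'') (l' - l'') = 2 * lsq - 2 * B l' l'' := by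
      have := hsymm l'' l'
      simp only [map_sub, LinearMap.sub_apply]
      linarith
    have hs : B (l' + l'' - h) (l' + l'' - h) = 2 * lsq - B h h + 2 * B l' l'' := by
      have e1 := hsymm l'' l'
      have e2 := hsymm h l'
      have e3 := hsymm h l''
      simp only [map_sub, map_add, LinearMap.sub_apply, LinearMap.add_apply]
      linarith
    obtain ⟨hd0, hdiff⟩ := key (l' - l'')
    obtain ⟨hs0, hsum⟩ := key (l' + l'' - h)
    refine ⟨⟨by linarith, by linarith [hδ]⟩, ?_, ?_⟩
    · constructor
      · intro h0
        have : B (l' - l'') (l' - l'') = 0 := by linarith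
        have := hdiff.mp this
        exact (sub_eq_zero.mp this).symm
      · intro h0; subst h0; linarith
    · constructor
      · intro h0
        have : B (l' + l'' - h) (l' + l'' - h) = 0 := by linarith [hδ]
        have h5 := hsum.mp this
        have : l' + l'' = h := by
          have := sub_eq_zero.mp h5; exact this
        rw [← this]; abel
      · intro h0; subst h0
        have hz : l' + (h - l') - h = 0 := by abel
        rw [hz] at hs
        have hz2 : B (0 : V) (0 : V) = 0 := by simp
        rw [hz2] at hs
        linarith [hδ]
  refine ⟨part1, ?_⟩
  intro A hA hadm
  have pairs : ∀ x ∈ A, ∀ y ∈ A, x ≠ y → lsq - B x y ≤ δ ∧ (lsq - B x y = δ → y = h - x) := by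
    intro x hx y hy hxy
    obtain ⟨hx1, hx2⟩ := hA x hx
    obtain ⟨hy1, hy2⟩ := hA y hy
    obtain ⟨⟨_, hle⟩, _, heq⟩ := part1 x y hx1 hy1 hx2 hy2
    exact ⟨hle, heq.mp⟩
  constructor
  · intro hδ1
    by_contra hc
    push_neg at hc
    obtain ⟨x, hx, y, hy, hxy⟩ := Finset.one_lt_card.mp hc
    have := pairs x hx y hy hxy
    rcases hadm x hx y hy hxy with h5 | h5 | h5 <;> linarith [this.1]
  · intro hδ2
    have hdual : ∀ x ∈ A, ∀ y ∈ A, x ≠ y → y = h - x := by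
      intro x hx y hy hxy
      obtain ⟨hle, heq⟩ := pairs x hx y hy hxy
      rcases hadm x hx y hy hxy with h5 | h5 | h5
      · exact heq (by linarith)
      · linarith
      · linarith
    refine ⟨?_, hdual⟩
    by_contra hc
    push_neg at hc
    obtain ⟨x, hx, y, hy, z, hz, hxy, hxz, hyz⟩ := Finset.two_lt_card.mp hc
    have e1 := hdual x hx y hy hxy
    have e2 := hdual x hx z hz hxz
    exact hyz (e1.trans e2.symm)
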